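/- For every positive integer d, the polynomial Ξ^{(d)}(z;t) = Σ_{j=0}^{d-1} b_j(t)·E_j(z) is the unique polynomial in K[t,z] of degree in z strictly less than q^d that agrees with χ_t on A(d); i.e., Ξ^{(d)}(a;t) = χ_t(a) for all a ∈ A of degree < d. -/

import Mathlib

noncomputable section
open Polynomial
set_option linter.unusedSectionVars false

variable (Fq : Type) [Field Fq] [Fintype Fq]

/-- The polynomial `∑ i, c i * θ^i` determined by a tuple `c : Fin d → Fq`;
as `c` ranges over all tuples this enumerates `A(d)`. -/
def polyOf {d : ℕ} (c : Fin d → Fq) : Polynomial Fq :=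
  ∑ i : Fin d, C (c i) * X ^ (i : ℕ)

/-- `D_d`, the product of all monic polynomials of degree `d` in `A = 𝔽_q[θ]`. -/
def Dmonic (d : ℕ) : Polynomial Fq :=
  ∏ c : Fin d → Fq, (X ^ d + polyOf Fq c)

/-- The normalized Carlitz polynomial `E_d(z) = D_d⁻¹ ∏_{a ∈ A(d)} (z - a) ∈ K[z]`. -/
def Ecar (d : ℕ) : Polynomial (RatFunc Fq) :=
  C (algebraMap (Polynomial Fq) (RatFunc Fq) (Dmonic Fq d))⁻¹ *
    ∏ c : Fin d → Fq, (X - C (algebraMap (Polynomial Fq) (RatFunc Fq) (polyOf Fq c)))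

/-- `b_j(t) = ∏_{i=0}^{j-1} (t - θ^{q^i}) ∈ K[t]`. -/
def bK (j : ℕ) : Polynomial (RatFunc Fq) :=
  ∏ i ∈ Finset.range j,
    (X - C (algebraMap (Polynomial Fq) (RatFunc Fq) ((X : Polynomial Fq) ^ (Fintype.card Fq) ^ i)))

/-- `χ_t(a) ∈ 𝔽_q[t] ⊆ K[t]`: the image of `a ∈ A` under the `𝔽_q`-algebra
morphism `θ ↦ t`. -/
def chiK (a : Polynomial Fq) : Polynomial (RatFunc Fq) :=
  a.map (algebraMap Fq (RatFunc Fq))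

/-- The interpolation polynomial `Ξ^{(d)}(z;t) = ∑_{j=0}^{d-1} b_j(t)·E_j(z)`,
viewed in `K[t][z]` (outer variable `z`, inner variable `t`). -/
def XiPoly (d : ℕ) : Polynomial (Polynomial (RatFunc Fq)) :=
  ∑ j ∈ Finset.range d,
    Polynomial.C (bK Fq j) * (Ecar Fq j).map (Polynomial.C : RatFunc Fq →+* Polynomial (RatFunc Fq))

/-! ### Auxiliary development -/

local notation "K" => RatFunc Fq
local notation "φ" => algebraMap (Polynomial Fq) (RatFunc Fq)
local notation "qq" => Fintype.card Fq

lemma polyOf_coeff {d : ℕ} (c : Fin d → Fq) (k : ℕ) :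
    (polyOf Fq c).coeff k = if h : k < d then c ⟨k, h⟩ else 0 := by
  classical
  unfold polyOf
  rw [finset_sum_coeff]
  simp only [coeff_C_mul, coeff_X_pow, mul_ite, mul_one, mul_zero]
  split
  · next h =>
    rw [Finset.sum_eq_single (⟨k, h⟩ : Fin d)]
    · simp
    · intro b _ hb
      rw [if_neg]
      intro hk
      exact hb (Fin.ext hk.symm)
    · intro hmem; exact absurd (Finset.mem_univ _) hmem
  · next h =>
    apply Finset.sum_eq_zero
    intro i _
    rw [if_neg]
    intro hk
    exact h (hk ▸ i.isLt)

lemma polyOf_injective {d : ℕ} : Function.Injective (polyOf Fq (d := d)) := by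
  intro c c' h
  funext i
  have := congrArg (fun p => Polynomial.coeff p (i : ℕ)) h
  simpa [polyOf_coeff, i.isLt] using this

lemma polyOf_zero {d : ℕ} : polyOf Fq (0 : Fin d → Fq) = 0 := by
  simp [polyOf]

lemma polyOf_neg {d : ℕ} (c : Fin d → Fq) : polyOf Fq (-c) = -polyOf Fq c := by
  simp [polyOf, Finset.sum_neg_distrib]

lemma polyOf_degree_lt {d : ℕ} (c : Fin d → Fq) : (polyOf Fq c).degree < (d : WithBot ℕ) := by
  apply lt_of_le_of_lt (degree_sum_le _ _)
  rw [Finset.sup_lt_iff (WithBot.bot_lt_coe _)]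
  intro i _
  apply lt_of_le_of_lt (degree_mul_le _ _)
  apply lt_of_le_of_lt (add_le_add degree_C_le (degree_X_pow_le (i : ℕ)))
  rw [zero_add]
  exact_mod_cast WithBot.coe_lt_coe.mpr i.isLt

lemma exists_polyOf {d : ℕ} {a : Polynomial Fq} (ha : a.degree < (d : WithBot ℕ)) :
    ∃ c : Fin d → Fq, polyOf Fq c = a := by
  refine ⟨fun i => a.coeff (i : ℕ), ?_⟩
  ext k
  rw [polyOf_coeff]
  split
  · rfl
  · next h =>
    exact (coeff_eq_zero_of_degree_lt (lt_of_lt_of_le ha (by exact_mod_cast Nat.cast_le.mpr (not_lt.mp h)))).symm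

lemma polyOf_snoc (j : ℕ) (c : Fin j → Fq) (α : Fq) :
    polyOf Fq (Fin.snoc c α) = polyOf Fq c + C α * X ^ j := by
  unfold polyOf
  rw [Fin.sum_univ_castSucc]
  simp [Fin.snoc_castSucc, Fin.snoc_last]

lemma Dmonic_monic (j : ℕ) : (Dmonic Fq j).Monic := by
  apply monic_prod_of_monic
  intro c _
  exact monic_X_pow_add (polyOf_degree_lt Fq c)

lemma Dmonic_zero : Dmonic Fq 0 = 1 := by
  unfold Dmonic
  haveI : Unique (Fin 0 → Fq) := Pi.uniqueOfIsEmpty _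
  rw [Fintype.prod_unique]
  simp [polyOf]

lemma phi_injective : Function.Injective (φ) := IsFractionRing.injective (Polynomial Fq) (RatFunc Fq)

lemma phi_Dmonic_ne (j : ℕ) : φ (Dmonic Fq j) ≠ 0 := by
  intro h
  exact (Dmonic_monic Fq j).ne_zero (phi_injective Fq (by simpa using h))

lemma phi_C_eq (α : Fq) : φ (Polynomial.C α) = algebraMap Fq (RatFunc Fq) α := by
  rw [IsScalarTower.algebraMap_apply Fq (Polynomial Fq) (RatFunc Fq)]
  rfl
/-! ### Characteristic and Frobenius -/

lemma card_eq_char_pow : ∃ p n : ℕ, Nat.Prime p ∧ Fintype.card Fq = p ^ n ∧ CharP Fq p := by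
  haveI : Fact (Nat.Prime (ringChar Fq)) := ⟨CharP.char_is_prime Fq (ringChar Fq)⟩
  obtain ⟨n, hp, hcard⟩ := FiniteField.card Fq (ringChar Fq)
  exact ⟨ringChar Fq, n, hp, hcard, ringChar.charP Fq⟩

lemma pow_card_add {R : Type} [CommRing R] [Nontrivial R] (f : Fq →+* R) (x y : R) :
    (x + y) ^ Fintype.card Fq = x ^ Fintype.card Fq + y ^ Fintype.card Fq := by
  obtain ⟨p, n, hp, hcard, hchar⟩ := card_eq_char_pow Fq
  haveI := hchar
  haveI : Fact p.Prime := ⟨hp⟩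
  haveI : CharP R p := charP_of_injective_ringHom f.injective p
  rw [hcard]
  have h := map_add (iterateFrobenius R p n) x y
  simp only [iterateFrobenius_def] at h
  exact h

lemma pow_card_sub {R : Type} [CommRing R] [Nontrivial R] (f : Fq →+* R) (x y : R) :
    (x - y) ^ Fintype.card Fq = x ^ Fintype.card Fq - y ^ Fintype.card Fq := by
  obtain ⟨p, n, hp, hcard, hchar⟩ := card_eq_char_pow Fq
  haveI := hchar
  haveI : Fact p.Prime := ⟨hp⟩
  haveI : CharP R p := charP_of_injective_ringHom f.injective p
  rw [hcard]
  have h := map_sub (iterateFrobenius R p n) x y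
  simp only [iterateFrobenius_def] at h
  exact h

lemma pow_card_sum {R : Type} [CommRing R] [Nontrivial R] (f : Fq →+* R) {ι : Type}
    (s : Finset ι) (g : ι → R) :
    (∑ i ∈ s, g i) ^ Fintype.card Fq = ∑ i ∈ s, g i ^ Fintype.card Fq := by
  obtain ⟨p, n, hp, hcard, hchar⟩ := card_eq_char_pow Fq
  haveI := hchar
  haveI : Fact p.Prime := ⟨hp⟩
  haveI : CharP R p := charP_of_injective_ringHom f.injective p
  rw [hcard]
  have h := map_sum (iterateFrobenius R p n) g s
  simp only [iterateFrobenius_def] at h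
  exact h

/-- `∏_{a ∈ 𝔽_q} (X - a) = X^q - X`. -/
lemma prod_X_sub_C_univ :
    ∏ a : Fq, (X - C a) = X ^ Fintype.card Fq - X := by
  have h2 : 1 < Fintype.card Fq := Fintype.one_lt_card
  have hm : (X ^ Fintype.card Fq - X : Polynomial Fq).Monic := by
    have : Fintype.card Fq = (Fintype.card Fq - 1) + 1 := by omega
    rw [this, sub_eq_add_neg]
    apply monic_X_pow_add
    rw [degree_neg]
    calc degree (X : Polynomial Fq) ≤ 1 := degree_X_le
    _ < ((Fintype.card Fq - 1 : ℕ) + 1 : ℕ) := by exact_mod_cast Nat.lt_succ_of_le (by omega)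
  have hroots := FiniteField.roots_X_pow_card_sub_X Fq
  have hcard : Multiset.card (X ^ Fintype.card Fq - X : Polynomial Fq).roots
      = (X ^ Fintype.card Fq - X : Polynomial Fq).natDegree := by
    rw [hroots, FiniteField.X_pow_card_sub_X_natDegree_eq Fq h2]
    simp
  have h3 := prod_multiset_X_sub_C_of_monic_of_roots_card_eq hm hcard
  rw [← h3, hroots, Finset.prod_eq_multiset_prod]

lemma prod_sub_iota (w : RatFunc Fq) :
    ∏ α : Fq, (w - algebraMap Fq (RatFunc Fq) α) = w ^ Fintype.card Fq - w := by
  have := congrArg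
    (fun p : Polynomial Fq => Polynomial.eval w (p.map (algebraMap Fq (RatFunc Fq))))
    (prod_X_sub_C_univ Fq)
  simpa [Polynomial.map_prod, eval_prod, Polynomial.map_sub, Polynomial.map_pow] using this

lemma prod_sub_smul (Y c0 : RatFunc Fq) (hc : c0 ≠ 0) :
    ∏ α : Fq, (Y - algebraMap Fq (RatFunc Fq) α * c0)
      = Y ^ Fintype.card Fq - c0 ^ (Fintype.card Fq - 1) * Y := by
  have h1 : ∀ α : Fq, Y - algebraMap Fq (RatFunc Fq) α * c0
      = c0 * (Y / c0 - algebraMap Fq (RatFunc Fq) α) := by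
    intro α
    field_simp
  rw [Finset.prod_congr rfl (fun α _ => h1 α), Finset.prod_mul_distrib, Finset.prod_const,
    Finset.card_univ, prod_sub_iota Fq (Y / c0)]
  have hq : (0 : ℕ) < Fintype.card Fq := Fintype.card_pos
  have hc0 : c0 ^ Fintype.card Fq = c0 ^ (Fintype.card Fq - 1) * c0 := by
    rw [← pow_succ]
    congr 1
    omega
  rw [mul_sub, div_pow, mul_div_cancel₀ _ (pow_ne_zero _ hc), hc0]
  have h2 : c0 ^ (Fintype.card Fq - 1) * c0 * (Y / c0) = c0 ^ (Fintype.card Fq - 1) * Y := by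
    field_simp
  rw [h2]

/-! ### The Carlitz products `e_j` as functions on `K` -/

/-- `e_j(x) = ∏_{a ∈ A(j)} (x - a)` as a function on `K = 𝔽_q(θ)`. -/
def evC (j : ℕ) (x : RatFunc Fq) : RatFunc Fq :=
  ∏ c : Fin j → Fq, (x - algebraMap (Polynomial Fq) (RatFunc Fq) (polyOf Fq c))

lemma evC_zero_def (x : RatFunc Fq) : evC Fq 0 x = x := by
  unfold evC
  haveI : Unique (Fin 0 → Fq) := Pi.uniqueOfIsEmpty _
  rw [Fintype.prod_unique]
  simp [polyOf]

lemma evC_root (j : ℕ) {a : Polynomial Fq} (ha : a.degree < (j : WithBot ℕ)) :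
    evC Fq j (φ a) = 0 := by
  obtain ⟨c, rfl⟩ := exists_polyOf Fq ha
  exact Finset.prod_eq_zero (Finset.mem_univ c) (sub_self _)

lemma evC_zero (j : ℕ) : evC Fq j 0 = 0 := by
  have h := evC_root Fq j (a := 0) (by rw [degree_zero]; exact_mod_cast WithBot.bot_lt_coe j)
  simpa using h

lemma evC_theta (j : ℕ) : evC Fq j (φ ((X : Polynomial Fq) ^ j)) = φ (Dmonic Fq j) := by
  unfold evC
  have : ∀ c : Fin j → Fq, φ ((X : Polynomial Fq) ^ j) - φ (polyOf Fq c)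
      = φ ((X : Polynomial Fq) ^ j - polyOf Fq c) := by
    intro c; rw [map_sub]
  rw [Finset.prod_congr rfl (fun c _ => this c), ← map_prod]
  congr 1
  unfold Dmonic
  apply Fintype.prod_equiv (Equiv.neg _)
  intro c
  rw [Equiv.neg_apply, polyOf_neg]
  ring

lemma prod_snoc_aux {M : Type} [CommMonoid M] (j : ℕ) (f : (Fin (j+1) → Fq) → M) :
    ∏ c : Fin (j+1) → Fq, f c = ∏ α : Fq, ∏ c : Fin j → Fq, f (Fin.snoc c α) := by
  rw [← (Equiv.prod_comp (Fin.snocEquiv (fun _ => Fq)) f), Fintype.prod_prod_type]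
  rfl

/-- The recursion `e_{j+1}(x) = e_j(x)^q - D_j^{q-1} e_j(x)`, given linearity at level `j`. -/
lemma evC_rec_of_lin (j : ℕ)
    (hadd : ∀ x y : RatFunc Fq, evC Fq j (x + y) = evC Fq j x + evC Fq j y)
    (hsmul : ∀ (α : Fq) (x : RatFunc Fq),
      evC Fq j (algebraMap Fq (RatFunc Fq) α * x) = algebraMap Fq (RatFunc Fq) α * evC Fq j x)
    (x : RatFunc Fq) :
    evC Fq (j+1) x = evC Fq j x ^ Fintype.card Fq
      - φ (Dmonic Fq j) ^ (Fintype.card Fq - 1) * evC Fq j x := by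
  have hsub : ∀ u v : RatFunc Fq, evC Fq j (u - v) = evC Fq j u - evC Fq j v := by
    intro u v
    have hneg : evC Fq j (-v) = -evC Fq j v := by
      have h := hadd v (-v)
      rw [add_neg_cancel, evC_zero] at h
      exact eq_neg_of_add_eq_zero_right h.symm
    rw [sub_eq_add_neg, hadd, hneg, ← sub_eq_add_neg]
  unfold evC
  rw [prod_snoc_aux]
  have h1 : ∀ (α : Fq) (c : Fin j → Fq),
      x - φ (polyOf Fq (Fin.snoc c α))
        = (x - algebraMap Fq (RatFunc Fq) α * φ ((X:Polynomial Fq) ^ j)) - φ (polyOf Fq c) := by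
    intro α c
    rw [polyOf_snoc, map_add, map_mul, phi_C_eq]
    ring
  have h2 : ∀ α : Fq, ∏ c : Fin j → Fq, (x - φ (polyOf Fq (Fin.snoc c α)))
      = evC Fq j x - algebraMap Fq (RatFunc Fq) α * φ (Dmonic Fq j) := by
    intro α
    rw [Finset.prod_congr rfl (fun c _ => h1 α c)]
    have : ∏ c : Fin j → Fq, ((x - algebraMap Fq (RatFunc Fq) α * φ ((X:Polynomial Fq) ^ j)) - φ (polyOf Fq c))
        = evC Fq j (x - algebraMap Fq (RatFunc Fq) α * φ ((X:Polynomial Fq) ^ j)) := rfl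
    rw [this, hsub, hsmul, evC_theta]
  rw [Finset.prod_congr rfl (fun α _ => h2 α)]
  exact prod_sub_smul Fq (evC Fq j x) (φ (Dmonic Fq j)) (phi_Dmonic_ne Fq j)

lemma evC_linear (j : ℕ) :
    (∀ x y : RatFunc Fq, evC Fq j (x + y) = evC Fq j x + evC Fq j y)
    ∧ (∀ (α : Fq) (x : RatFunc Fq),
        evC Fq j (algebraMap Fq (RatFunc Fq) α * x) = algebraMap Fq (RatFunc Fq) α * evC Fq j x) := by
  induction j with
  | zero =>
    constructor <;> intros <;> simp [evC_zero_def]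
  | succ j ih =>
    have hrec := evC_rec_of_lin Fq j ih.1 ih.2
    constructor
    · intro x y
      rw [hrec, hrec, hrec, ih.1, pow_card_add Fq (algebraMap Fq (RatFunc Fq))]
      ring
    · intro α x
      rw [hrec, hrec, ih.2, mul_pow, ← map_pow, FiniteField.pow_card]
      ring

lemma evC_rec (j : ℕ) (x : RatFunc Fq) :
    evC Fq (j+1) x = evC Fq j x ^ Fintype.card Fq
      - φ (Dmonic Fq j) ^ (Fintype.card Fq - 1) * evC Fq j x :=
  evC_rec_of_lin Fq j (evC_linear Fq j).1 (evC_linear Fq j).2 x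
/-! ### `e_j` as polynomials, additive form, and the bracket relation -/

/-- `e_j(z) = ∏_{a ∈ A(j)} (z - a) ∈ K[z]`. -/
def eP (j : ℕ) : Polynomial (RatFunc Fq) :=
  ∏ c : Fin j → Fq, (X - C (φ (polyOf Fq c)))

lemma eP_eval (j : ℕ) (x : RatFunc Fq) : (eP Fq j).eval x = evC Fq j x := by
  simp [eP, evC, eval_prod]

lemma Ecar_eq (j : ℕ) : Ecar Fq j = C (φ (Dmonic Fq j))⁻¹ * eP Fq j := rfl

instance : Infinite (RatFunc Fq) :=
  Infinite.of_injective (φ) (phi_injective Fq)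

lemma eP_rec (j : ℕ) :
    eP Fq (j+1) = eP Fq j ^ Fintype.card Fq
      - C (φ (Dmonic Fq j) ^ (Fintype.card Fq - 1)) * eP Fq j := by
  apply Polynomial.funext
  intro r
  simp only [eval_sub, eval_mul, eval_C, eval_pow, eP_eval]
  exact evC_rec Fq j r

lemma eP_monic (j : ℕ) : (eP Fq j).Monic :=
  monic_prod_of_monic _ _ (fun c _ => monic_X_sub_C _)

lemma eP_natDegree (j : ℕ) : (eP Fq j).natDegree = Fintype.card Fq ^ j := by
  rw [eP, natDegree_prod]
  · simp only [natDegree_X_sub_C]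
    rw [Finset.sum_const, Finset.card_univ, Fintype.card_fun, Fintype.card_fin, smul_eq_mul,
      mul_one]
  · intro c _
    exact X_sub_C_ne_zero _

lemma eP_coeff_one_ne (j : ℕ) : (eP Fq j).coeff 1 ≠ 0 := by
  classical
  have hsplit : eP Fq j = (X - C (φ (polyOf Fq (0 : Fin j → Fq))))
      * ∏ c ∈ (Finset.univ.erase (0 : Fin j → Fq)), (X - C (φ (polyOf Fq c))) :=
    (Finset.mul_prod_erase Finset.univ _ (Finset.mem_univ _)).symm
  rw [polyOf_zero, map_zero, map_zero, sub_zero] at hsplit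
  rw [hsplit, coeff_X_mul, coeff_zero_eq_eval_zero, eval_prod]
  apply Finset.prod_ne_zero_iff.mpr
  intro c hc
  rw [eval_sub, eval_X, eval_C, zero_sub, neg_ne_zero]
  intro h
  apply Finset.ne_of_mem_erase hc
  apply polyOf_injective Fq
  rw [polyOf_zero]
  exact phi_injective Fq (by simpa using h)

/-- Additive (q-power) coefficient form of `e_j`. -/
lemma eP_addForm (j : ℕ) : ∃ c : ℕ → RatFunc Fq, (∀ i, j < i → c i = 0) ∧ c j = 1 ∧
    eP Fq j = ∑ i ∈ Finset.range (j+1), C (c i) * X ^ (Fintype.card Fq ^ i) := by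
  induction j with
  | zero =>
    refine ⟨fun i => if i = 0 then 1 else 0, fun i hi => if_neg (by omega), by simp, ?_⟩
    have : eP Fq 0 = X := by
      unfold eP
      haveI : Unique (Fin 0 → Fq) := Pi.uniqueOfIsEmpty _
      rw [Fintype.prod_unique]
      simp [polyOf]
    rw [this]
    simp
  | succ j ih =>
    obtain ⟨c, hz, h1, hform⟩ := ih
    refine ⟨fun i => (if i = 0 then 0 else c (i-1) ^ Fintype.card Fq)
      - φ (Dmonic Fq j) ^ (Fintype.card Fq - 1) * c i, ?_, ?_, ?_⟩
    · intro i hi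
      change (if i = 0 then 0 else c (i-1) ^ Fintype.card Fq)
        - φ (Dmonic Fq j) ^ (Fintype.card Fq - 1) * c i = 0
      rw [if_neg (by omega : ¬ i = 0), hz i (by omega), hz (i-1) (by omega), mul_zero, sub_zero,
        zero_pow Fintype.card_ne_zero]
    · change (if j + 1 = 0 then 0 else c (j+1-1) ^ Fintype.card Fq)
        - φ (Dmonic Fq j) ^ (Fintype.card Fq - 1) * c (j+1) = 1
      rw [if_neg (Nat.succ_ne_zero j), Nat.add_sub_cancel, h1, one_pow, hz (j+1) (by omega),
        mul_zero, sub_zero]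
    · have hpow : (∑ i ∈ Finset.range (j+1), C (c i) * X ^ (Fintype.card Fq ^ i)) ^ Fintype.card Fq
          = ∑ i ∈ Finset.range (j+1), C (c i ^ Fintype.card Fq) * X ^ (Fintype.card Fq ^ (i+1)) := by
        rw [pow_card_sum Fq ((Polynomial.C : RatFunc Fq →+* Polynomial (RatFunc Fq)).comp
          (algebraMap Fq (RatFunc Fq)))]
        apply Finset.sum_congr rfl
        intro i _
        rw [mul_pow, ← C_pow, ← pow_mul, ← pow_succ]
      simp only [map_sub, map_mul, sub_mul, Finset.sum_sub_distrib]
      rw [eP_rec, hform, hpow]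
      congr 1
      · conv_rhs => rw [Finset.sum_range_succ']
        simp [Nat.succ_ne_zero]
      · conv_rhs => rw [Finset.sum_range_succ]
        rw [hz (j+1) (by omega)]
        simp [Finset.mul_sum, mul_assoc]
/-! ### The key bracket relation `D_{j+1} = (θ^{q^{j+1}} - θ) D_j^q` -/

lemma Dmonic_rel (j : ℕ) :
    φ (Dmonic Fq (j+1))
      = (φ (X : Polynomial Fq) ^ (Fintype.card Fq) ^ (j+1) - φ (X : Polynomial Fq))
        * φ (Dmonic Fq j) ^ Fintype.card Fq := by
  classical
  set T : RatFunc Fq := φ (X : Polynomial Fq) with hT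
  obtain ⟨c, hz, hc1, hform⟩ := eP_addForm Fq (j+1)
  obtain ⟨c', hz', hc1', hform'⟩ := eP_addForm Fq j
  set brkt : RatFunc Fq := T ^ (Fintype.card Fq) ^ (j+1) - T with hbrkt
  set G : ℕ → RatFunc Fq := fun i =>
    c i * (T ^ (Fintype.card Fq) ^ i - T)
      - brkt * (if i = 0 then 0 else c' (i-1) ^ Fintype.card Fq) with hG
  set g : Polynomial (RatFunc Fq)
    := ∑ i ∈ Finset.range (j+2), C (G i) * X ^ (Fintype.card Fq ^ i) with hg
  have hgev : ∀ x : RatFunc Fq, g.eval x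
      = (evC Fq (j+1) (T * x) - T * evC Fq (j+1) x)
        - brkt * (evC Fq j x) ^ Fintype.card Fq := by
    intro x
    have eL : ∀ y : RatFunc Fq,
        evC Fq (j+1) y = ∑ i ∈ Finset.range (j+2), c i * y ^ (Fintype.card Fq ^ i) := by
      intro y
      rw [← eP_eval, hform, eval_finset_sum]
      simp only [eval_mul, eval_C, eval_pow, eval_X]
    have eJ : evC Fq j x = ∑ i ∈ Finset.range (j+1), c' i * x ^ (Fintype.card Fq ^ i) := by
      rw [← eP_eval, hform', eval_finset_sum]
      simp only [eval_mul, eval_C, eval_pow, eval_X]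
    have h2 : (∑ i ∈ Finset.range (j+1), c' i * x ^ (Fintype.card Fq ^ i)) ^ Fintype.card Fq
        = ∑ i ∈ Finset.range (j+2),
            (if i = 0 then 0 else c' (i-1) ^ Fintype.card Fq) * x ^ (Fintype.card Fq ^ i) := by
      rw [pow_card_sum Fq (algebraMap Fq (RatFunc Fq))]
      conv_rhs => rw [Finset.sum_range_succ']
      have h0 : (if (0:ℕ) = 0 then (0 : RatFunc Fq) else c' (0-1) ^ Fintype.card Fq) = 0 :=
        if_pos rfl
      rw [h0, zero_mul, add_zero]
      apply Finset.sum_congr rfl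
      intro i _
      rw [if_neg (Nat.succ_ne_zero i), Nat.add_sub_cancel, mul_pow, ← pow_mul, ← pow_succ]
    rw [eL, eL, eJ, h2, hg, eval_finset_sum]
    simp only [eval_mul, eval_C, eval_pow, eval_X]
    rw [Finset.mul_sum, Finset.mul_sum, ← Finset.sum_sub_distrib, ← Finset.sum_sub_distrib]
    apply Finset.sum_congr rfl
    intro i _
    simp only [hG, mul_pow]
    ring
  have hroot : ∀ cc : Fin j → Fq, g.eval (φ (polyOf Fq cc)) = 0 := by
    intro cc
    rw [hgev]
    have h1 : evC Fq j (φ (polyOf Fq cc)) = 0 := evC_root Fq j (polyOf_degree_lt Fq cc)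
    have h2 : evC Fq (j+1) (φ (polyOf Fq cc)) = 0 :=
      evC_root Fq (j+1) (lt_trans (polyOf_degree_lt Fq cc) (by exact_mod_cast Nat.lt_succ_self j))
    have h3 : T * φ (polyOf Fq cc) = φ ((X : Polynomial Fq) * polyOf Fq cc) := by
      rw [hT, ← map_mul]
    have h4 : evC Fq (j+1) (T * φ (polyOf Fq cc)) = 0 := by
      rw [h3]
      apply evC_root Fq (j+1)
      rcases eq_or_ne (polyOf Fq cc) 0 with h | h
      · rw [h, mul_zero, degree_zero]
        exact_mod_cast WithBot.bot_lt_coe _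
      · rw [degree_mul, degree_X, degree_eq_natDegree h]
        have h5 := polyOf_degree_lt Fq cc
        rw [degree_eq_natDegree h] at h5
        norm_cast at h5 ⊢
        omega
    rw [h1, h2, h4]
    simp
  have hGtop : G (j+1) = 0 := by
    simp [hG, hc1, hc1', hbrkt, Nat.succ_ne_zero]
  have hdeg : degree g ≤ ((Fintype.card Fq ^ j : ℕ) : WithBot ℕ) := by
    rw [hg, Finset.sum_range_succ, hGtop, map_zero, zero_mul, add_zero]
    apply le_trans (degree_sum_le _ _)
    apply Finset.sup_le
    intro i hi
    apply le_trans (degree_mul_le _ _)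
    apply le_trans (add_le_add degree_C_le (degree_X_pow_le _))
    rw [zero_add]
    have : Fintype.card Fq ^ i ≤ Fintype.card Fq ^ j :=
      Nat.pow_le_pow_right Fintype.card_pos (Nat.lt_succ_iff.mp (Finset.mem_range.mp hi))
    exact_mod_cast this
  have hc1g : g.coeff 1 = 0 := by
    rw [hg, finset_sum_coeff]
    apply Finset.sum_eq_zero
    intro i _
    rw [coeff_C_mul, coeff_X_pow]
    rcases Nat.eq_zero_or_pos i with h | h
    · subst h
      simp [hG]
    · have hne : Fintype.card Fq ^ i ≠ 1 :=
        (Nat.one_lt_pow (by omega) Fintype.one_lt_card).ne'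
      rw [if_neg (fun hh => hne hh.symm), mul_zero]
  have hinj : Function.Injective (fun cc : Fin j → Fq => φ (polyOf Fq cc)) :=
    (phi_injective Fq).comp (polyOf_injective Fq)
  have hmod : g %ₘ eP Fq j = 0 := by
    apply eq_zero_of_natDegree_lt_card_of_eval_eq_zero _ hinj
    · intro cc
      rw [modByMonic_eq_sub_mul_div g (eP Fq j), eval_sub, eval_mul, eP_eval,
        evC_root Fq j (polyOf_degree_lt Fq cc), zero_mul, sub_zero]
      exact hroot cc
    · rcases eq_or_ne (g %ₘ eP Fq j) 0 with h | h
      · rw [h, natDegree_zero, Fintype.card_fun, Fintype.card_fin]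
        exact pow_pos Fintype.card_pos j
      · have hlt : degree (g %ₘ eP Fq j) < degree (eP Fq j) :=
          degree_modByMonic_lt g (eP_monic Fq j)
        rw [degree_eq_natDegree (eP_monic Fq j).ne_zero, eP_natDegree] at hlt
        rw [Fintype.card_fun, Fintype.card_fin]
        exact (natDegree_lt_iff_degree_lt h).mpr hlt
  have hquot : g = eP Fq j * (g /ₘ eP Fq j) := by
    have h := modByMonic_add_div g (eP Fq j)
    rw [hmod, zero_add] at h
    exact h.symm
  have hgz : g = 0 := by
    rcases eq_or_ne (g /ₘ eP Fq j) 0 with hq0 | hq0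
    · rw [hquot, hq0, mul_zero]
    · have hgne : natDegree g = Fintype.card Fq ^ j + natDegree (g /ₘ eP Fq j) := by
        conv_lhs => rw [hquot]
        rw [natDegree_mul (eP_monic Fq j).ne_zero hq0, eP_natDegree]
      have h2 : natDegree g ≤ Fintype.card Fq ^ j := natDegree_le_iff_degree_le.mpr hdeg
      have hd0 : natDegree (g /ₘ eP Fq j) = 0 := by omega
      have hγ := eq_C_of_natDegree_eq_zero hd0
      have hcoeff : (0 : RatFunc Fq) = (eP Fq j).coeff 1 * (g /ₘ eP Fq j).coeff 0 := by
        rw [← hc1g]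
        conv_lhs => rw [hquot, hγ]
        rw [coeff_mul_C]
      rcases mul_eq_zero.mp hcoeff.symm with h | h
      · exact absurd h (eP_coeff_one_ne Fq j)
      · rw [hquot, hγ, h, map_zero, mul_zero]
  have hfin := hgev (φ ((X : Polynomial Fq) ^ j))
  rw [hgz, eval_zero] at hfin
  have hTx : T * φ ((X : Polynomial Fq) ^ j) = φ ((X : Polynomial Fq) ^ (j+1)) := by
    rw [hT, ← map_mul, ← pow_succ']
  have hmid : evC Fq (j+1) (φ ((X : Polynomial Fq) ^ j)) = 0 := by
    apply evC_root Fq (j+1)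
    rw [degree_X_pow]
    exact_mod_cast Nat.lt_succ_self j
  rw [hTx, evC_theta, evC_theta, hmid, mul_zero, sub_zero] at hfin
  exact sub_eq_zero.mp hfin.symm
/-! ### `E_j` and the Frobenius interpolation identity -/

/-- `E_j(x) = D_j⁻¹ e_j(x)` as a function on `K`. -/
def Efun (j : ℕ) (x : RatFunc Fq) : RatFunc Fq := (φ (Dmonic Fq j))⁻¹ * evC Fq j x

/-- `β_{m,j} = b_j(θ^{q^m})`. -/
def betaC (m j : ℕ) : RatFunc Fq :=
  ∏ l ∈ Finset.range j,
    (φ (X : Polynomial Fq) ^ (Fintype.card Fq) ^ m - φ (X : Polynomial Fq) ^ (Fintype.card Fq) ^ l)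

lemma Efun_zero_eval (x : RatFunc Fq) : Efun Fq 0 x = x := by
  rw [Efun, evC_zero_def, Dmonic_zero, map_one, inv_one, one_mul]

lemma Efun_root (j : ℕ) {a : Polynomial Fq} (ha : degree a < (j : WithBot ℕ)) :
    Efun Fq j (φ a) = 0 := by
  rw [Efun, evC_root Fq j ha, mul_zero]

lemma Efun_theta (j : ℕ) : Efun Fq j (φ (X : Polynomial Fq) ^ j) = 1 := by
  rw [Efun, ← map_pow, evC_theta, inv_mul_cancel₀ (phi_Dmonic_ne Fq j)]

lemma Efun_sum {ι : Type} (j : ℕ) (s : Finset ι) (f : ι → RatFunc Fq) :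
    Efun Fq j (∑ i ∈ s, f i) = ∑ i ∈ s, Efun Fq j (f i) := by
  classical
  have hsum : evC Fq j (∑ i ∈ s, f i) = ∑ i ∈ s, evC Fq j (f i) := by
    induction s using Finset.induction with
    | empty => simp [evC_zero]
    | insert a s h ih => rw [Finset.sum_insert h, (evC_linear Fq j).1, ih, Finset.sum_insert h]
  rw [Efun, hsum, Finset.mul_sum]
  rfl

lemma Efun_smul (j : ℕ) (α : Fq) (x : RatFunc Fq) :
    Efun Fq j (algebraMap Fq (RatFunc Fq) α * x) = algebraMap Fq (RatFunc Fq) α * Efun Fq j x := by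
  rw [Efun, (evC_linear Fq j).2, Efun]
  ring

lemma Efun_pow_card (j : ℕ) (x : RatFunc Fq) :
    Efun Fq j x ^ Fintype.card Fq
      = (φ (X : Polynomial Fq) ^ (Fintype.card Fq) ^ (j+1) - φ (X : Polynomial Fq))
          * Efun Fq (j+1) x + Efun Fq j x := by
  have hD := phi_Dmonic_ne Fq j
  have hD1 := phi_Dmonic_ne Fq (j+1)
  have hrec := evC_rec Fq j x
  have hrel := Dmonic_rel Fq j
  have hbr : φ (X : Polynomial Fq) ^ (Fintype.card Fq) ^ (j+1) - φ (X : Polynomial Fq) ≠ 0 := by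
    intro h
    rw [h, zero_mul] at hrel
    exact hD1 hrel
  have hDq : (φ (Dmonic Fq j)) ^ Fintype.card Fq
      = (φ (Dmonic Fq j)) ^ (Fintype.card Fq - 1) * φ (Dmonic Fq j) := by
    rw [← pow_succ]
    congr 1
    have := Fintype.card_pos (α := Fq)
    omega
  apply mul_right_cancel₀ (pow_ne_zero (Fintype.card Fq) hD)
  rw [Efun, Efun, hrec, hrel]
  set e : RatFunc Fq := evC Fq j x
  set D : RatFunc Fq := φ (Dmonic Fq j)
  set B : RatFunc Fq := φ (X : Polynomial Fq) ^ (Fintype.card Fq) ^ (j+1) - φ (X : Polynomial Fq)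
  have hL : (D⁻¹ * e) ^ Fintype.card Fq * D ^ Fintype.card Fq = e ^ Fintype.card Fq := by
    rw [← mul_pow, mul_comm D⁻¹ e, inv_mul_cancel_right₀ hD]
  have hR : (B * ((B * D ^ Fintype.card Fq)⁻¹
        * (e ^ Fintype.card Fq - D ^ (Fintype.card Fq - 1) * e)) + D⁻¹ * e) * D ^ Fintype.card Fq
      = e ^ Fintype.card Fq := by
    rw [add_mul, mul_inv]
    have h1 : B * (B⁻¹ * (D ^ Fintype.card Fq)⁻¹
          * (e ^ Fintype.card Fq - D ^ (Fintype.card Fq - 1) * e)) * D ^ Fintype.card Fq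
        = (B * B⁻¹) * ((D ^ Fintype.card Fq)⁻¹ * D ^ Fintype.card Fq)
          * (e ^ Fintype.card Fq - D ^ (Fintype.card Fq - 1) * e) := by
      ring
    have h2 : D⁻¹ * e * D ^ Fintype.card Fq = D ^ (Fintype.card Fq - 1) * e := by
      rw [hDq]
      have h3 : D⁻¹ * e * (D ^ (Fintype.card Fq - 1) * D)
          = (D⁻¹ * D) * (D ^ (Fintype.card Fq - 1) * e) := by ring
      rw [h3, inv_mul_cancel₀ hD, one_mul]
    rw [h1, h2, mul_inv_cancel₀ hbr, inv_mul_cancel₀ (pow_ne_zero _ hD), one_mul, one_mul]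
    ring
  rw [hL, hR]

lemma betaC_zero (m : ℕ) : betaC Fq m 0 = 1 := by simp [betaC]

lemma betaC_zero_of_gt {m j : ℕ} (h : m < j) : betaC Fq m j = 0 :=
  Finset.prod_eq_zero (Finset.mem_range.mpr h) (sub_self _)

lemma betaC_pow (m j : ℕ) : betaC Fq m j ^ Fintype.card Fq
    = ∏ l ∈ Finset.range j,
        (φ (X : Polynomial Fq) ^ (Fintype.card Fq) ^ (m+1)
          - φ (X : Polynomial Fq) ^ (Fintype.card Fq) ^ (l+1)) := by
  rw [betaC, ← Finset.prod_pow]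
  apply Finset.prod_congr rfl
  intro l _
  rw [pow_card_sub Fq (algebraMap Fq (RatFunc Fq)), ← pow_mul, ← pow_mul, ← pow_succ, ← pow_succ]

lemma betaC_step (m k : ℕ) : betaC Fq (m+1) (k+1)
    = (φ (X : Polynomial Fq) ^ (Fintype.card Fq) ^ (m+1) - φ (X : Polynomial Fq))
      * betaC Fq m k ^ Fintype.card Fq := by
  rw [betaC, Finset.prod_range_succ', pow_zero, pow_one, ← betaC_pow]
  ring

lemma betaC_split (m k : ℕ) : betaC Fq (m+1) (k+1)
    = betaC Fq m k ^ Fintype.card Fq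
        * (φ (X : Polynomial Fq) ^ (Fintype.card Fq) ^ (k+1) - φ (X : Polynomial Fq))
      + betaC Fq m (k+1) ^ Fintype.card Fq := by
  rw [betaC_step]
  have h := betaC_pow Fq m (k+1)
  rw [Finset.prod_range_succ, ← betaC_pow] at h
  rw [h]
  ring

/-- Carlitz's formula specialized at `t = θ^{q^m}`:
`x^{q^m} = ∑_{j ≤ m} β_{m,j} E_j(x)` for every `x ∈ K`. -/
lemma frobId : ∀ (m : ℕ) (x : RatFunc Fq),
    x ^ (Fintype.card Fq) ^ m = ∑ j ∈ Finset.range (m+1), betaC Fq m j * Efun Fq j x := by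
  intro m
  induction m with
  | zero =>
    intro x
    simp [betaC_zero, Efun_zero_eval]
  | succ m ih =>
    intro x
    have h1 : x ^ (Fintype.card Fq) ^ (m+1) = (x ^ (Fintype.card Fq) ^ m) ^ Fintype.card Fq := by
      rw [← pow_mul, pow_succ]
    rw [h1, ih, pow_card_sum Fq (algebraMap Fq (RatFunc Fq))]
    have h2 : ∀ j ∈ Finset.range (m+1), (betaC Fq m j * Efun Fq j x) ^ Fintype.card Fq
        = betaC Fq m j ^ Fintype.card Fq
            * ((φ (X : Polynomial Fq) ^ (Fintype.card Fq) ^ (j+1) - φ (X : Polynomial Fq))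
                * Efun Fq (j+1) x)
          + betaC Fq m j ^ Fintype.card Fq * Efun Fq j x := by
      intro j _
      rw [mul_pow, Efun_pow_card, mul_add]
    rw [Finset.sum_congr rfl h2, Finset.sum_add_distrib]
    conv_rhs => rw [Finset.sum_range_succ']
    rw [betaC_zero, one_mul]
    have h3 : ∀ k ∈ Finset.range (m+1), betaC Fq (m+1) (k+1) * Efun Fq (k+1) x
        = betaC Fq m k ^ Fintype.card Fq
            * ((φ (X : Polynomial Fq) ^ (Fintype.card Fq) ^ (k+1) - φ (X : Polynomial Fq))
                * Efun Fq (k+1) x)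
          + betaC Fq m (k+1) ^ Fintype.card Fq * Efun Fq (k+1) x := by
      intro k _
      rw [betaC_split, add_mul]
      ring
    rw [Finset.sum_congr rfl h3, Finset.sum_add_distrib, add_assoc]
    congr 1
    have h4 : Efun Fq 0 x = betaC Fq m 0 ^ Fintype.card Fq * Efun Fq 0 x := by
      rw [betaC_zero, one_pow, one_mul]
    rw [h4]
    conv_rhs => rw [← Finset.sum_range_succ' (fun k => betaC Fq m k ^ Fintype.card Fq * Efun Fq k x) (m+1)]
    conv_rhs => rw [Finset.sum_range_succ]
    rw [betaC_zero_of_gt Fq (Nat.lt_succ_self m), zero_pow Fintype.card_ne_zero, zero_mul, add_zero]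
/-! ### The interpolation identity on powers of `θ` -/

lemma bK_eval_beta (m j : ℕ) :
    (bK Fq j).eval (φ (X : Polynomial Fq) ^ (Fintype.card Fq) ^ m) = betaC Fq m j := by
  rw [bK, eval_prod, betaC]
  apply Finset.prod_congr rfl
  intro l _
  rw [eval_sub, eval_X, eval_C, map_pow]

lemma bK_monic (j : ℕ) : (bK Fq j).Monic :=
  monic_prod_of_monic _ _ fun i _ => monic_X_sub_C _

lemma bK_natDegree (j : ℕ) : (bK Fq j).natDegree = j := by
  rw [bK, natDegree_prod _ _ (fun i _ => X_sub_C_ne_zero _)]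
  simp only [natDegree_X_sub_C]
  simp

lemma sum_bK_Efun_theta (i : ℕ) :
    ∑ j ∈ Finset.range (i+1), bK Fq j * Polynomial.C (Efun Fq j (φ (X : Polynomial Fq) ^ i))
      = (X : Polynomial (RatFunc Fq)) ^ i := by
  set P : Polynomial (RatFunc Fq) :=
    (∑ j ∈ Finset.range (i+1), bK Fq j * C (Efun Fq j (φ (X : Polynomial Fq) ^ i))) - X ^ i
    with hP
  have hdegP : degree P < (i : WithBot ℕ) := by
    rw [hP, Finset.sum_range_succ, Efun_theta, map_one, mul_one, add_sub_assoc]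
    apply lt_of_le_of_lt (degree_add_le _ _)
    apply max_lt
    · apply lt_of_le_of_lt (degree_sum_le _ _)
      rw [Finset.sup_lt_iff (WithBot.bot_lt_coe _)]
      intro j hj
      apply lt_of_le_of_lt (degree_mul_le _ _)
      apply lt_of_le_of_lt (add_le_add (degree_le_natDegree) degree_C_le)
      rw [bK_natDegree, add_zero]
      exact_mod_cast Finset.mem_range.mp hj
    · have hd : degree (bK Fq i) = degree ((X : Polynomial (RatFunc Fq)) ^ i) := by
        rw [degree_eq_natDegree (bK_monic Fq i).ne_zero, bK_natDegree, degree_X_pow]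
      have hlt := degree_sub_lt hd (bK_monic Fq i).ne_zero
        (by rw [(bK_monic Fq i).leadingCoeff, (monic_X_pow i).leadingCoeff])
      rw [degree_eq_natDegree (bK_monic Fq i).ne_zero, bK_natDegree] at hlt
      exact hlt
  have hev : ∀ m : Fin i, P.eval (φ (X : Polynomial Fq) ^ (Fintype.card Fq) ^ (m : ℕ)) = 0 := by
    intro m
    rw [hP, eval_sub, eval_finset_sum]
    have h1 : ∀ j ∈ Finset.range (i+1),
        (bK Fq j * C (Efun Fq j (φ (X : Polynomial Fq) ^ i))).eval
            (φ (X : Polynomial Fq) ^ (Fintype.card Fq) ^ (m : ℕ))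
          = betaC Fq (m : ℕ) j * Efun Fq j (φ (X : Polynomial Fq) ^ i) := by
      intro j _
      rw [eval_mul, eval_C, bK_eval_beta]
    rw [Finset.sum_congr rfl h1]
    have h2 : ∑ j ∈ Finset.range (i+1), betaC Fq (m : ℕ) j * Efun Fq j (φ (X : Polynomial Fq) ^ i)
        = ∑ j ∈ Finset.range ((m : ℕ)+1), betaC Fq (m : ℕ) j * Efun Fq j (φ (X : Polynomial Fq) ^ i) := by
      symm
      apply Finset.sum_subset
      · exact Finset.range_subset_range.mpr (by omega)
      · intro j _ hj
        have hmj : (m : ℕ) < j := by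
          by_contra hc
          exact hj (Finset.mem_range.mpr (by omega))
        rw [betaC_zero_of_gt Fq hmj, zero_mul]
    rw [h2, ← frobId Fq (m : ℕ) (φ (X : Polynomial Fq) ^ i), eval_pow, eval_X,
      ← pow_mul, ← pow_mul, mul_comm, sub_self]
  have hinj : Function.Injective
      (fun m : Fin i => φ (X : Polynomial Fq) ^ (Fintype.card Fq) ^ (m : ℕ)) := by
    intro m m' h
    simp only at h
    have h1 : ((X : Polynomial Fq) ^ (Fintype.card Fq) ^ (m : ℕ))
        = (X : Polynomial Fq) ^ (Fintype.card Fq) ^ (m' : ℕ) := by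
      apply phi_injective Fq
      rw [map_pow, map_pow]
      exact h
    have h2 : (Fintype.card Fq) ^ (m : ℕ) = (Fintype.card Fq) ^ (m' : ℕ) := by
      have h3 := congrArg natDegree h1
      simpa [natDegree_X_pow] using h3
    exact Fin.ext (Nat.pow_right_injective Fintype.one_lt_card h2)
  have hP0 : P = 0 := by
    rcases eq_or_ne P 0 with h | h
    · exact h
    · apply eq_zero_of_natDegree_lt_card_of_eval_eq_zero P hinj hev
      rw [Fintype.card_fin]
      exact (natDegree_lt_iff_degree_lt h).mpr hdegP
  rw [hP] at hP0
  exact sub_eq_zero.mp hP0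

/-- Interpolation: `∑_{j<d} b_j(t) E_j(a) = χ_t(a)` for `deg a < d`. -/
lemma interp_eval (d : ℕ) {a : Polynomial Fq} (ha : a.natDegree < d) :
    ∑ j ∈ Finset.range d, bK Fq j * Polynomial.C (Efun Fq j (φ a)) = chiK Fq a := by
  rw [Polynomial.as_sum_range' a d ha]
  rw [map_sum]
  have hterm : ∀ i ∈ Finset.range d, φ ((monomial i) (a.coeff i))
      = algebraMap Fq (RatFunc Fq) (a.coeff i) * φ (X : Polynomial Fq) ^ i := by
    intro i _
    rw [← C_mul_X_pow_eq_monomial, map_mul, phi_C_eq, map_pow]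
  rw [Finset.sum_congr rfl hterm]
  have hE : ∀ j ∈ Finset.range d,
      bK Fq j * C (Efun Fq j (∑ i ∈ Finset.range d,
          algebraMap Fq (RatFunc Fq) (a.coeff i) * φ (X : Polynomial Fq) ^ i))
        = ∑ i ∈ Finset.range d, C (algebraMap Fq (RatFunc Fq) (a.coeff i))
            * (bK Fq j * C (Efun Fq j (φ (X : Polynomial Fq) ^ i))) := by
    intro j _
    rw [Efun_sum]
    have : ∀ i ∈ Finset.range d,
        Efun Fq j (algebraMap Fq (RatFunc Fq) (a.coeff i) * φ (X : Polynomial Fq) ^ i)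
          = algebraMap Fq (RatFunc Fq) (a.coeff i) * Efun Fq j (φ (X : Polynomial Fq) ^ i) := by
      intro i _
      rw [Efun_smul]
    rw [Finset.sum_congr rfl this, map_sum, Finset.mul_sum]
    apply Finset.sum_congr rfl
    intro i _
    rw [map_mul]
    ring
  rw [Finset.sum_congr rfl hE, Finset.sum_comm]
  have hinner : ∀ i ∈ Finset.range d,
      ∑ j ∈ Finset.range d, C (algebraMap Fq (RatFunc Fq) (a.coeff i))
          * (bK Fq j * C (Efun Fq j (φ (X : Polynomial Fq) ^ i)))
        = C (algebraMap Fq (RatFunc Fq) (a.coeff i)) * (X : Polynomial (RatFunc Fq)) ^ i := by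
    intro i hi
    rw [← Finset.mul_sum]
    congr 1
    have htrunc : ∑ j ∈ Finset.range d, bK Fq j * C (Efun Fq j (φ (X : Polynomial Fq) ^ i))
        = ∑ j ∈ Finset.range (i+1), bK Fq j * C (Efun Fq j (φ (X : Polynomial Fq) ^ i)) := by
      symm
      apply Finset.sum_subset
      · exact Finset.range_subset_range.mpr (Finset.mem_range.mp hi)
      · intro j _ hj
        have hji : i < j := by
          by_contra hc
          exact hj (Finset.mem_range.mpr (by omega))
        have h0 : Efun Fq j (φ (X : Polynomial Fq) ^ i) = 0 := by
          rw [← map_pow]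
          exact Efun_root Fq j (by rw [degree_X_pow]; exact_mod_cast hji)
        rw [h0, map_zero, mul_zero]
    rw [htrunc, sum_bK_Efun_theta]
  rw [Finset.sum_congr rfl hinner, chiK, Polynomial.map_sum]
  apply Finset.sum_congr rfl
  intro i _
  rw [Polynomial.map_monomial, ← C_mul_X_pow_eq_monomial]
/-! ### The main theorem -/

/-- **Interpolation of `χ_t` on `A(d)`.** For every `d ≥ 1`, the polynomial
`Ξ^{(d)}(z;t) = ∑_{j<d} b_j(t) E_j(z)` is the unique polynomial in `K[t,z]` of
degree in `z` strictly less than `q^d = |A(d)|` that interpolates the values of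
`χ_t` on `A(d)`. -/
theorem XiPoly_interpolates (d : ℕ) (hd : 0 < d) :
    ((XiPoly Fq d).degree < ((Fintype.card Fq ^ d : ℕ) : WithBot ℕ) ∧
      ∀ a : Polynomial Fq, a.degree < (d : WithBot ℕ) →
        (XiPoly Fq d).eval (Polynomial.C (algebraMap (Polynomial Fq) (RatFunc Fq) a)) = chiK Fq a) ∧
    ∀ Ψ : Polynomial (Polynomial (RatFunc Fq)),
      Ψ.degree < ((Fintype.card Fq ^ d : ℕ) : WithBot ℕ) →
      (∀ a : Polynomial Fq, a.degree < (d : WithBot ℕ) →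
        Ψ.eval (Polynomial.C (algebraMap (Polynomial Fq) (RatFunc Fq) a)) = chiK Fq a) →
      Ψ = XiPoly Fq d := by
  have hval : ∀ a : Polynomial Fq, a.degree < (d : WithBot ℕ) →
      (XiPoly Fq d).eval (Polynomial.C (algebraMap (Polynomial Fq) (RatFunc Fq) a))
        = chiK Fq a := by
    intro a ha
    have hnat : a.natDegree < d := by
      rcases eq_or_ne a 0 with rfl | h
      · simpa using hd
      · exact_mod_cast (natDegree_lt_iff_degree_lt h).mpr ha
    rw [XiPoly, eval_finset_sum]
    have hterm : ∀ j ∈ Finset.range d,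
        (Polynomial.C (bK Fq j)
            * (Ecar Fq j).map (Polynomial.C : RatFunc Fq →+* Polynomial (RatFunc Fq))).eval
            (Polynomial.C (φ a))
          = bK Fq j * Polynomial.C (Efun Fq j (φ a)) := by
      intro j _
      rw [eval_mul, eval_C, eval_map, eval₂_at_apply]
      congr 1
      rw [Ecar_eq, eval_mul, eval_C, eP_eval, Efun]
    rw [Finset.sum_congr rfl hterm]
    exact interp_eval Fq d hnat
  have hdegXi : (XiPoly Fq d).degree < ((Fintype.card Fq ^ d : ℕ) : WithBot ℕ) := by
    rw [XiPoly]
    apply lt_of_le_of_lt (degree_sum_le _ _)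
    rw [Finset.sup_lt_iff (WithBot.bot_lt_coe _)]
    intro j hj
    have h1 : degree (Ecar Fq j) ≤ ((Fintype.card Fq ^ j : ℕ) : WithBot ℕ) := by
      rw [Ecar_eq]
      apply le_trans (degree_mul_le _ _)
      apply le_trans (add_le_add degree_C_le degree_le_natDegree)
      rw [eP_natDegree, zero_add]
    apply lt_of_le_of_lt (degree_mul_le _ _)
    apply lt_of_le_of_lt (add_le_add degree_C_le (degree_map_le.trans h1))
    rw [zero_add]
    exact_mod_cast Nat.pow_lt_pow_right Fintype.one_lt_card (Finset.mem_range.mp hj)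
  refine ⟨⟨hdegXi, hval⟩, ?_⟩
  intro Ψ hdeg hΨ
  have hinj : Function.Injective (fun c : Fin d → Fq => Polynomial.C (φ (polyOf Fq c))) := by
    intro c c' h
    exact polyOf_injective Fq (phi_injective Fq (Polynomial.C_injective h))
  have hsub : Ψ - XiPoly Fq d = 0 := by
    rcases eq_or_ne (Ψ - XiPoly Fq d) 0 with h | h
    · exact h
    · apply eq_zero_of_natDegree_lt_card_of_eval_eq_zero _ hinj
      · intro c
        rw [eval_sub, hΨ _ (polyOf_degree_lt Fq c), hval _ (polyOf_degree_lt Fq c), sub_self]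
      · rw [Fintype.card_fun, Fintype.card_fin]
        apply (natDegree_lt_iff_degree_lt h).mpr
        apply lt_of_le_of_lt (degree_sub_le _ _)
        exact max_lt hdeg hdegXi
  exact sub_eq_zero.mp hsub
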